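/- The map (p, a) ↦ exp(a) * p (coordinatewise multiplication) defines a homeomorphism from P × V_P^⊥ onto the subspace W^ℝ(P) = {f: ℱ → ℝ_{≥0} : f⁻¹(0) = ℱ_G for some face G of P} of ℝ^ℱ_{≥0}, where P is embedded in ℝ^ℱ_{≥0} via facet-distances. -/

import Mathlib

open Filter Topology
set_option linter.unusedSectionVars false
set_option linter.unusedVariables false


variable {n : ℕ} {ι : Type*} [Fintype ι]

/-- The direction subspace `V_P = A_P(ℝⁿ) ⊂ ℝ^ℱ`, i.e. the span of the columns of
the defining matrix `A_P`. -/
def dirSpace (A : ι → (Fin n → ℝ)) : Submodule ℝ (EuclideanSpace ℝ ι) :=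
  Submodule.span ℝ (Set.range fun r : Fin n => (WithLp.toLp 2 (fun i => A i r) : EuclideanSpace ℝ ι))

/-- `W^ℝ(P)`: the space of nonnegative functions on the facet set whose zero set is
the set of facets containing some face of `P`, i.e. the set of facets active at
some point `x` of the polytope. -/
def WR (A : ι → (Fin n → ℝ)) (b : ι → ℝ) (Q : Set (Fin n → ℝ)) :
    Set (EuclideanSpace ℝ ι) :=
  {f | (∀ i, 0 ≤ f i) ∧ ∃ x ∈ Q, ∀ i, (f i = 0 ↔ ∑ r, A i r * x r = b i)}




section AuxReal

lemma R2 (t c : ℝ) (ht : 0 ≤ t) : -Real.exp (c - 1) ≤ t * (Real.log t - c) := by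
  rcases eq_or_lt_of_le ht with h | h
  · rw [← h]; simp [(Real.exp_pos (c-1)).le]
  · have h1 := Real.log_le_sub_one_of_pos (x := Real.exp (c-1)/t) (by positivity)
    rw [Real.log_div (Real.exp_ne_zero _) (ne_of_gt h), Real.log_exp] at h1
    have h2 : Real.exp (c-1)/t * t = Real.exp (c-1) := div_mul_cancel₀ _ (ne_of_gt h)
    nlinarith [Real.exp_pos (c-1)]

lemma R3 (c t : ℝ) (ht : Real.exp (c+1) ≤ t) : t ≤ t * (Real.log t - c) := by
  have ht0 : 0 < t := lt_of_lt_of_le (Real.exp_pos _) ht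
  have h1 : c + 1 ≤ Real.log t := by
    rw [← Real.log_exp (c+1)]
    exact Real.log_le_log (Real.exp_pos _) ht
  nlinarith

lemma R4 {D t : ℝ} (hD : 0 < D) (ht : Real.exp 1 * D ≤ t) :
    t/2 ≤ (Real.log t - Real.log D) * (t - D) := by
  have ht0 : 0 < t := lt_of_lt_of_le (by positivity) ht
  have h1 : 1 ≤ Real.log t - Real.log D := by
    rw [← Real.log_div (ne_of_gt ht0) (ne_of_gt hD)] at *
    have : Real.exp 1 ≤ t / D := (le_div_iff₀ hD).mpr (by linarith [ht])
    calc (1:ℝ) = Real.log (Real.exp 1) := (Real.log_exp 1).symm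
    _ ≤ Real.log (t/D) := Real.log_le_log (Real.exp_pos _) this
  have he : (2:ℝ) ≤ Real.exp 1 := by
    have := Real.add_one_le_exp 1; linarith
  have h2 : t/2 ≤ t - D := by nlinarith
  nlinarith

lemma R5 {a b : ℝ} (ha : 0 < a) (hb : 0 < b) : 0 ≤ (Real.log b - Real.log a) * (b - a) := by
  rcases le_total a b with h | h
  · exact mul_nonneg (by linarith [Real.log_le_log ha h]) (by linarith)
  · have := Real.log_le_log hb h
    nlinarith

lemma R6aux {a b R : ℝ} (ha : 0 < a) (hab : a ≤ b) (hbR : b ≤ R) :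
    (b - a)^2 ≤ R * ((Real.log b - Real.log a) * (b - a)) := by
  have hb : 0 < b := lt_of_lt_of_le ha hab
  have h1 := Real.log_le_sub_one_of_pos (x := a/b) (by positivity)
  rw [Real.log_div (ne_of_gt ha) (ne_of_gt hb)] at h1
  have h2 : a/b*b = a := div_mul_cancel₀ _ (ne_of_gt hb)
  have h3 : b - a ≤ b*(Real.log b - Real.log a) := by nlinarith [mul_le_mul_of_nonneg_left h1 hb.le]
  have hX : 0 ≤ Real.log b - Real.log a := by linarith [Real.log_le_log ha hab]
  have h4 : (b-a)^2 ≤ b*((Real.log b - Real.log a)*(b-a)) := by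
    nlinarith [mul_le_mul_of_nonneg_right h3 (sub_nonneg.2 hab)]
  have h5 : b*((Real.log b - Real.log a)*(b-a)) ≤ R*((Real.log b - Real.log a)*(b-a)) :=
    mul_le_mul_of_nonneg_right hbR (mul_nonneg hX (sub_nonneg.2 hab))
  linarith

lemma R6 {a b R : ℝ} (ha : 0 < a) (hb : 0 < b) (haR : a ≤ R) (hbR : b ≤ R) :
    (b - a)^2 ≤ R * ((Real.log b - Real.log a) * (b - a)) := by
  rcases le_total a b with h | h
  · exact R6aux ha h hbR
  · have := R6aux hb h haR
    nlinarith

lemma R7 {a b : ℝ} (ha : 0 ≤ a) (hb : 0 < b) :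
    (b*Real.log b - b) - (a*Real.log a - a) ≤ (b-a)*Real.log b := by
  rcases eq_or_lt_of_le ha with h | h
  · rw [← h]; simp; linarith
  · have h1 := Real.log_le_sub_one_of_pos (x := b/a) (by positivity)
    rw [Real.log_div (ne_of_gt hb) (ne_of_gt h)] at h1
    have h2 : b/a*a = b := div_mul_cancel₀ _ (ne_of_gt h)
    nlinarith

end AuxReal





section AuxLin
variable (A : ι → Fin n → ℝ) (b : ι → ℝ)

/-- distance to the i-th hyperplane -/
def ddf (y : Fin n → ℝ) (i : ι) : ℝ := (∑ r, A i r * y r) - b i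

/-- orthogonality to the column space, coordinate characterization -/
def PerpA (a : ι → ℝ) : Prop := ∀ r, ∑ i, a i * A i r = 0

variable {A b}

lemma perpA_sub {a c : ι → ℝ} (ha : PerpA A a) (hc : PerpA A c) :
    PerpA A (fun i => a i - c i) := by
  intro r; simp [sub_mul, Finset.sum_sub_distrib, ha r, hc r]

lemma perpA_key {u : ι → ℝ} (hu : PerpA A u) (z : Fin n → ℝ) :
    ∑ i, u i * (∑ r, A i r * z r) = 0 := by
  have h1 : ∀ i, u i * (∑ r, A i r * z r) = ∑ r, z r * (u i * A i r) := by
    intro i; rw [Finset.mul_sum]; exact Finset.sum_congr rfl (fun r _ => by ring)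
  rw [Finset.sum_congr rfl (fun i _ => h1 i), Finset.sum_comm]
  have h2 : ∀ r, ∑ i, z r * (u i * A i r) = 0 := fun r => by
    rw [← Finset.mul_sum, hu r, mul_zero]
  simp [h2]

lemma perpA_ddf_key {a c : ι → ℝ} (ha : PerpA A a) (hc : PerpA A c) (x y : Fin n → ℝ) :
    ∑ i, (a i - c i) * (ddf A b x i - ddf A b y i) = 0 := by
  have h1 : ∀ i, ddf A b x i - ddf A b y i = ∑ r, A i r * (x r - y r) := by
    intro i; simp [ddf, mul_sub, Finset.sum_sub_distrib]
  rw [Finset.sum_congr rfl (fun i _ => by rw [h1 i])]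
  exact perpA_key (perpA_sub ha hc) _

variable (A)

/-- `PerpA` as a submodule. -/
def PerpSub : Submodule ℝ (EuclideanSpace ℝ ι) where
  carrier := {u | ∀ r, ∑ i, u i * A i r = 0}
  add_mem' := by
    intro u v hu hv r
    have hr := hu r; have hr2 := hv r
    simp only [PiLp.add_apply, add_mul, Finset.sum_add_distrib] at *
    simp [hr, hr2]
  zero_mem' := by intro r; simp
  smul_mem' := by
    intro c u hu r
    have hr := hu r
    simp only [PiLp.smul_apply, smul_eq_mul, mul_assoc, ← Finset.mul_sum]
    simp [hr]

lemma mem_perpSub {a : EuclideanSpace ℝ ι} : a ∈ PerpSub A ↔ PerpA A (fun i => a i) :=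
  Iff.rfl

lemma dir_orth_eq : (dirSpace A)ᗮ = PerpSub A := by
  ext a
  constructor
  · intro h r
    have hcol : (WithLp.toLp 2 (fun i => A i r) : EuclideanSpace ℝ ι) ∈ dirSpace A :=
      Submodule.subset_span ⟨r, rfl⟩
    have h2 := (Submodule.mem_orthogonal _ a).mp h _ hcol
    rw [PiLp.inner_apply] at h2
    rw [← h2]
    exact Finset.sum_congr rfl (fun i _ => by simp [RCLike.inner_apply, mul_comm])
  · intro h
    rw [Submodule.mem_orthogonal]
    intro u hu
    have hle : dirSpace A ≤ LinearMap.ker ((innerSL ℝ a).toLinearMap) := by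
      apply Submodule.span_le.mpr
      rintro _ ⟨r, rfl⟩
      simp only [SetLike.mem_coe, LinearMap.mem_ker, ContinuousLinearMap.coe_coe, innerSL_apply_apply]
      rw [PiLp.inner_apply]
      rw [← h r]
      exact Finset.sum_congr rfl (fun i _ => by simp [RCLike.inner_apply, mul_comm])
    have := hle hu
    simp only [LinearMap.mem_ker, ContinuousLinearMap.coe_coe, innerSL_apply_apply] at this
    rw [← inner_conj_symm, this, map_zero]

variable {A}

lemma perp_supported_eq_zero (x : Fin n → ℝ)
    (hind : LinearIndependent ℝ (fun i : {i : ι // ∑ r, A i r * x r = b i} => A i.1))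
    {u : ι → ℝ} (hu : PerpA A u)
    (hsupp : ∀ i, ¬ (∑ r, A i r * x r = b i) → u i = 0) : ∀ i, u i = 0 := by
  classical
  set p : ι → Prop := fun i => ∑ r, A i r * x r = b i with hp
  have hsum : ∑ i : {i // p i}, u i.1 • A i.1 = 0 := by
    have h1 : ∑ i ∈ Finset.univ.filter p, u i • A i = ∑ i : {i // p i}, u i.1 • A i.1 :=
      Finset.sum_subtype (p := p) (Finset.univ.filter p)
        (fun i => by simp [Finset.mem_filter]) (fun i => u i • A i)
    rw [← h1, Finset.sum_filter_of_ne (by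
      intro i _ hne
      by_contra hpi
      exact hne (by rw [hsupp i hpi, zero_smul]))]
    funext r
    rw [Finset.sum_apply]
    have : ∀ i, (u i • A i) r = u i * A i r := fun i => rfl
    simp only [this]
    exact hu r
  intro i
  by_cases hpi : p i
  · exact Fintype.linearIndependent_iff.mp hind (fun j => u j.1) hsum ⟨i, hpi⟩
  · exact hsupp i hpi

variable (A)

/-- The matrix as a linear map into Euclidean space. -/
def Amap : (Fin n → ℝ) →ₗ[ℝ] EuclideanSpace ℝ ι where
  toFun x := WithLp.toLp 2 (fun i => ∑ r, A i r * x r)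
  map_add' x y := (WithLp.ext_iff (p := 2)).mpr <| funext fun i => by
    show (∑ r, A i r * (x r + y r)) = (∑ r, A i r * x r) + ∑ r, A i r * y r
    simp [mul_add, Finset.sum_add_distrib]
  map_smul' c x := (WithLp.ext_iff (p := 2)).mpr <| funext fun i => by
    show (∑ r, A i r * (c * x r)) = c * ∑ r, A i r * x r
    rw [Finset.mul_sum]
    exact Finset.sum_congr rfl (fun r _ => by ring)

lemma Amap_apply (x : Fin n → ℝ) (i : ι) : Amap A x i = ∑ r, A i r * x r := rfl

end AuxLin

section AuxTop

lemma tendsto_euclidean_iff {f : ℕ → EuclideanSpace ℝ ι} {g : EuclideanSpace ℝ ι} :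
    Tendsto f atTop (𝓝 g) ↔ ∀ i, Tendsto (fun k => f k i) atTop (𝓝 (g i)) := by
  constructor
  · intro h i
    exact (((continuous_apply i).comp (PiLp.continuous_ofLp 2 (fun _ : ι => ℝ))).tendsto g).comp h
  · intro h
    have h2 : Tendsto (fun k => (WithLp.equiv 2 (∀ _ : ι, ℝ)) (f k)) atTop
        (𝓝 ((WithLp.equiv 2 (∀ _ : ι, ℝ)) g)) := tendsto_pi_nhds.mpr h
    have h3 := ((PiLp.continuous_toLp 2 (fun _ : ι => ℝ)).tendsto _).comp h2
    simpa [Function.comp_def] using h3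

lemma tendsto_of_apply_linear {E F : Type*} [NormedAddCommGroup E] [NormedSpace ℝ E]
    [FiniteDimensional ℝ E] [NormedAddCommGroup F] [NormedSpace ℝ F]
    (L : E →ₗ[ℝ] F) (hL : Function.Injective L)
    {f : ℕ → E} {x : E} (h : Tendsto (fun k => L (f k)) atTop (𝓝 (L x))) :
    Tendsto f atTop (𝓝 x) := by
  have hemb := LinearMap.isClosedEmbedding_of_injective (f := L) (LinearMap.ker_eq_bot.mpr hL)
  exact hemb.toIsEmbedding.tendsto_nhds_iff.mpr h

end AuxTop





section Bij

variable {A : ι → Fin n → ℝ} {b : ι → ℝ} {Q : Set (Fin n → ℝ)}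

lemma ddf_nonneg (hQ : Q = {x | ∀ i, b i ≤ ∑ r, A i r * x r}) {p : Fin n → ℝ}
    (hp : p ∈ Q) (i : ι) : 0 ≤ ddf A b p i := by
  rw [hQ] at hp; exact sub_nonneg.2 (hp i)

lemma phi_mem (hQ : Q = {x | ∀ i, b i ≤ ∑ r, A i r * x r}) {p : Fin n → ℝ} (hp : p ∈ Q)
    (a : ι → ℝ) :
    (WithLp.toLp 2 (fun i => Real.exp (a i) * (ddf A b p i)) : EuclideanSpace ℝ ι) ∈ WR A b Q := by
  refine ⟨fun i => mul_nonneg (Real.exp_pos _).le (ddf_nonneg hQ hp i), p, hp, fun i => ?_⟩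
  simp only [PiLp.toLp_apply]
  rw [mul_eq_zero]
  constructor
  · rintro (h | h)
    · exact absurd h (Real.exp_ne_zero _)
    · rw [ddf] at h; linarith [sub_eq_zero.mp h]
  · intro h
    right
    rw [ddf, h, sub_self]

lemma phi_inj (hQ : Q = {x | ∀ i, b i ≤ ∑ r, A i r * x r})
    (hrank : Function.Injective
      (fun x : Fin n → ℝ => (fun i => ∑ r, A i r * x r : ι → ℝ)))
    (hsimple : ∀ x ∈ Q,
      LinearIndependent ℝ (fun i : {i : ι // ∑ r, A i r * x r = b i} => A i.1))
    {p q : Fin n → ℝ} (hp : p ∈ Q) (hq : q ∈ Q) {a c : ι → ℝ}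
    (ha : PerpA A a) (hc : PerpA A c)
    (heq : ∀ i, Real.exp (a i) * ddf A b p i = Real.exp (c i) * ddf A b q i) :
    p = q ∧ a = c := by
  have hdp : ∀ i, 0 ≤ ddf A b p i := ddf_nonneg hQ hp
  have hdq : ∀ i, 0 ≤ ddf A b q i := ddf_nonneg hQ hq
  have hzero : ∀ i, ddf A b p i = 0 ↔ ddf A b q i = 0 := by
    intro i
    constructor
    · intro h
      have := heq i; rw [h, mul_zero] at this
      rcases mul_eq_zero.mp this.symm with h' | h'
      · exact absurd h' (Real.exp_ne_zero _)
      · exact h'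
    · intro h
      have := heq i; rw [h, mul_zero] at this
      rcases mul_eq_zero.mp this with h' | h'
      · exact absurd h' (Real.exp_ne_zero _)
      · exact h'
  have horth := perpA_ddf_key (b := b) ha hc p q
  have hterm : ∀ i, (a i - c i) * (ddf A b p i - ddf A b q i) ≤ 0 := by
    intro i
    by_cases hp0 : ddf A b p i = 0
    · have hq0 : ddf A b q i = 0 := (hzero i).1 hp0
      rw [hp0, hq0]; simp
    · have hp' : 0 < ddf A b p i := lt_of_le_of_ne (hdp i) (Ne.symm hp0)
      have hq' : 0 < ddf A b q i :=
        lt_of_le_of_ne (hdq i) (Ne.symm (fun h => hp0 ((hzero i).2 h)))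
      have hl := congrArg Real.log (heq i)
      rw [Real.log_mul (Real.exp_ne_zero _) (ne_of_gt hp'),
        Real.log_mul (Real.exp_ne_zero _) (ne_of_gt hq'),
        Real.log_exp, Real.log_exp] at hl
      have hac : a i - c i = Real.log (ddf A b q i) - Real.log (ddf A b p i) := by linarith
      rw [hac]
      have := R5 hq' hp'
      nlinarith
  have hall : ∀ i, (a i - c i) * (ddf A b p i - ddf A b q i) = 0 := by
    have hneg : ∑ i, -((a i - c i) * (ddf A b p i - ddf A b q i)) = 0 := by
      rw [Finset.sum_neg_distrib, horth, neg_zero]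
    intro i
    have := (Finset.sum_eq_zero_iff_of_nonneg
      (fun j _ => neg_nonneg.2 (hterm j))).mp hneg i (Finset.mem_univ i)
    linarith
  have hdd : ∀ i, ddf A b p i = ddf A b q i := by
    intro i
    rcases mul_eq_zero.mp (hall i) with h | h
    · have hac : a i = c i := by linarith [sub_eq_zero.mp h]
      have := heq i
      rw [hac] at this
      exact mul_left_cancel₀ (Real.exp_ne_zero _) this
    · linarith [sub_eq_zero.mp h]
  have hpq : p = q := by
    apply hrank
    funext i
    have := hdd i
    simp only [ddf] at this
    linarith
  refine ⟨hpq, ?_⟩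
  have hsupp : ∀ i, ¬ (∑ r, A i r * p r = b i) → a i - c i = 0 := by
    intro i hi
    have hdp0 : ddf A b p i ≠ 0 := fun h => hi (by rw [ddf] at h; linarith [sub_eq_zero.mp h])
    have := heq i
    rw [← hpq] at this
    have hexp : Real.exp (a i) = Real.exp (c i) := mul_right_cancel₀ hdp0 this
    have := Real.exp_injective hexp
    linarith
  have := perp_supported_eq_zero (b := b) p (hsimple p hp) (perpA_sub ha hc) hsupp
  funext i
  have := this i
  linarith

end Bij




section Surj

variable (A : ι → Fin n → ℝ) (b : ι → ℝ)

lemma ddf_combo (p x : Fin n → ℝ) (t : ℝ) (i : ι) :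
    ddf A b (fun r => (1-t) * p r + t * x r) i
      = (1-t) * ddf A b p i + t * ddf A b x i := by
  simp only [ddf]
  have h1 : ∀ r ∈ Finset.univ, A i r * ((1-t) * p r + t * x r)
      = (1-t)*(A i r * p r) + t*(A i r * x r) := fun r _ => by ring
  rw [Finset.sum_congr rfl h1, Finset.sum_add_distrib, ← Finset.mul_sum, ← Finset.mul_sum]
  ring

lemma ddf_line (p v : Fin n → ℝ) (t : ℝ) (i : ι) :
    ddf A b (fun r => p r + t * v r) i = ddf A b p i + t * (∑ r, A i r * v r) := by
  simp only [ddf]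
  have h1 : ∀ r ∈ Finset.univ, A i r * (p r + t * v r)
      = A i r * p r + t*(A i r * v r) := fun r _ => by ring
  rw [Finset.sum_congr rfl h1, Finset.sum_add_distrib, ← Finset.mul_sum]
  ring

lemma ddf_cont (i : ι) : Continuous fun y : Fin n → ℝ => ddf A b y i := by
  unfold ddf
  exact (continuous_finset_sum _ fun r _ => continuous_const.mul (continuous_apply r)).sub
    continuous_const

/-- The closed face determined by the zero set of `f`. -/
def FF (f : ι → ℝ) : Set (Fin n → ℝ) :=
  {y | ∀ i, 0 ≤ ddf A b y i ∧ (f i = 0 → ddf A b y i = 0)}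

/-- The entropy-like potential. -/
noncomputable def PsiF (f : ι → ℝ) (y : Fin n → ℝ) : ℝ :=
  ∑ i, (ddf A b y i * Real.log (ddf A b y i) - ddf A b y i - ddf A b y i * Real.log (f i))

lemma psiF_cont (f : ι → ℝ) : Continuous (PsiF A b f) := by
  unfold PsiF
  refine continuous_finset_sum _ fun i _ => ?_
  have h1 := ddf_cont A b i
  exact ((Real.continuous_mul_log.comp h1).sub h1).sub (h1.mul continuous_const)

lemma FF_closed (f : ι → ℝ) : IsClosed (FF A b f) := by
  have : FF A b f = ⋂ i, ({y | 0 ≤ ddf A b y i} ∩ {y | f i = 0 → ddf A b y i = 0}) := by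
    ext y; simp [FF, Set.mem_iInter, forall_and]
  rw [this]
  refine isClosed_iInter fun i => (IsClosed.inter ?_ ?_)
  · exact isClosed_le continuous_const (ddf_cont A b i)
  · by_cases h : f i = 0
    · simp only [h, forall_true_left]
      exact isClosed_eq (ddf_cont A b i) continuous_const
    · simp only [h, IsEmpty.forall_iff]  -- {y | False → _} = univ
      exact isClosed_univ
    
lemma FF_term_lb (f : ι → ℝ) (hf0 : ∀ i, 0 ≤ f i) {y : Fin n → ℝ} (hy : y ∈ FF A b f)
    (i : ι) :
    -(f i) ≤ ddf A b y i * Real.log (ddf A b y i) - ddf A b y i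
      - ddf A b y i * Real.log (f i) := by
  by_cases h : f i = 0
  · rw [(hy i).2 h, h]; simp
  · have hfi : 0 < f i := lt_of_le_of_ne (hf0 i) (Ne.symm h)
    have h2 := R2 (ddf A b y i) (1 + Real.log (f i)) (hy i).1
    rw [show (1 + Real.log (f i) - 1) = Real.log (f i) by ring, Real.exp_log hfi] at h2
    nlinarith

lemma exists_min (f : ι → ℝ) (hf0 : ∀ i, 0 ≤ f i)
    (hrank : Function.Injective
      (fun x : Fin n → ℝ => (fun i => ∑ r, A i r * x r : ι → ℝ)))
    (x : Fin n → ℝ) (hxF : x ∈ FF A b f) :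
    ∃ p ∈ FF A b f, ∀ y ∈ FF A b f, PsiF A b f p ≤ PsiF A b f y := by
  classical
  set B : ℝ := PsiF A b f x + ∑ i, f i with hB
  set R : ι → ℝ := fun j => max (Real.exp ((1 + Real.log (f j)) + 1)) B with hR
  set K : Set (Fin n → ℝ) := {y ∈ FF A b f | PsiF A b f y ≤ PsiF A b f x} with hK
  -- bound the distances on K
  have hbound : ∀ y ∈ K, ∀ j, ddf A b y j ≤ R j := by
    rintro y ⟨hyF, hyΨ⟩ j
    have hterm : ∀ i, -(f i) ≤ ddf A b y i * Real.log (ddf A b y i) - ddf A b y i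
        - ddf A b y i * Real.log (f i) := FF_term_lb A b f hf0 hyF
    have hPsiy : PsiF A b f y = ∑ i, (ddf A b y i * Real.log (ddf A b y i) - ddf A b y i
        - ddf A b y i * Real.log (f i)) := rfl
    have hsplit := Finset.add_sum_erase Finset.univ
      (fun i => ddf A b y i * Real.log (ddf A b y i) - ddf A b y i
        - ddf A b y i * Real.log (f i)) (Finset.mem_univ j)
    have hyΨ' : ∑ i, (ddf A b y i * Real.log (ddf A b y i) - ddf A b y i
        - ddf A b y i * Real.log (f i)) ≤ PsiF A b f x := hyΨ
    have hsum_lb : ∑ i ∈ Finset.univ.erase j, -(f i)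
        ≤ ∑ i ∈ Finset.univ.erase j, (ddf A b y i * Real.log (ddf A b y i) - ddf A b y i
        - ddf A b y i * Real.log (f i)) :=
      Finset.sum_le_sum fun i _ => hterm i
    have hsumf : ∑ i ∈ Finset.univ.erase j, f i ≤ ∑ i, f i :=
      Finset.sum_le_sum_of_subset_of_nonneg (Finset.erase_subset _ _) fun i _ _ => hf0 i
    have hsum_neg : ∑ i ∈ Finset.univ.erase j, -(f i)
        = -(∑ i ∈ Finset.univ.erase j, f i) := by rw [Finset.sum_neg_distrib]
    have htermj : ddf A b y j * Real.log (ddf A b y j) - ddf A b y j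
        - ddf A b y j * Real.log (f j) ≤ B := by
      linarith [hsplit, hsum_lb, hsumf, hsum_neg, hyΨ']
    -- now conclude
    by_cases hcase : ddf A b y j ≤ Real.exp ((1 + Real.log (f j)) + 1)
    · exact le_trans hcase (le_max_left _ _)
    · push_neg at hcase
      have h3 := R3 (1 + Real.log (f j)) (ddf A b y j) hcase.le
      have : ddf A b y j ≤ B := by nlinarith
      exact le_trans this (le_max_right _ _)
  -- K is compact
  have hAinj : Function.Injective ⇑(Amap A) := fun u v huv => hrank (congrArg WithLp.ofLp huv)
  have hemb := LinearMap.isClosedEmbedding_of_injective (f := Amap A)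
    (LinearMap.ker_eq_bot.mpr hAinj)
  set C : Set (EuclideanSpace ℝ ι) := (EuclideanSpace.equiv ι ℝ).toHomeomorph ⁻¹'
      (Set.univ.pi fun i => Set.Icc (b i) (R i + b i)) with hC
  have hCcomp : IsCompact C :=
    (Homeomorph.isCompact_preimage _).mpr (isCompact_univ_pi fun i => isCompact_Icc)
  have hKsub : K ⊆ ⇑(Amap A) ⁻¹' C := by
    rintro y hy
    simp only [hC, Set.mem_preimage, Set.mem_univ_pi]
    intro i
    have h0 : 0 ≤ ddf A b y i := (hy.1 i).1
    have h1 : ddf A b y i ≤ R i := hbound y hy i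
    have h2 : Amap A y i = ddf A b y i + b i := by
      rw [Amap_apply, ddf]; ring
    show Amap A y i ∈ Set.Icc (b i) (R i + b i)
    rw [h2]
    exact ⟨by linarith, by linarith⟩
  have hKclosed : IsClosed K := by
    have : K = FF A b f ∩ (PsiF A b f) ⁻¹' (Set.Iic (PsiF A b f x)) := rfl
    rw [this]
    exact (FF_closed A b f).inter (isClosed_Iic.preimage (psiF_cont A b f))
  have hKcomp : IsCompact K :=
    IsCompact.of_isClosed_subset (hemb.isCompact_preimage hCcomp) hKclosed hKsub
  have hKne : K.Nonempty := ⟨x, hxF, le_refl _⟩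
  obtain ⟨p, hpK, hpmin⟩ := hKcomp.exists_isMinOn hKne (psiF_cont A b f).continuousOn
  refine ⟨p, hpK.1, fun y hy => ?_⟩
  by_cases hcase : PsiF A b f y ≤ PsiF A b f x
  · exact hpmin ⟨hy, hcase⟩
  · exact le_trans (hpmin ⟨hxF, le_refl _⟩) (by linarith)

end Surj




section CaseLemmas

lemma caseII {dp δ fi t : ℝ} (hdp : 0 < dp) (ht : 0 < t) (ht1 : t ≤ 1)
    (hb2 : dp/2 ≤ dp + t*δ) :
    ((dp + t*δ) * Real.log (dp + t*δ) - (dp + t*δ)) - (dp * Real.log dp - dp)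
      - t*δ*Real.log fi
      ≤ t * (|δ| * (|Real.log (dp/2)| + |Real.log (dp + |δ|)| + |Real.log fi|
        + |Real.log (abs δ)| + 1)) := by
  have hb' : 0 < dp + t*δ := lt_of_lt_of_le (by linarith) hb2
  have h7 := R7 hdp.le hb'
  have htd : t*δ ≤ |δ| := by
    calc t*δ ≤ |t*δ| := le_abs_self _
    _ = t*|δ| := by rw [abs_mul, abs_of_pos ht]
    _ ≤ 1*|δ| := mul_le_mul_of_nonneg_right ht1 (abs_nonneg _)
    _ = |δ| := one_mul _
  have hup : dp + t*δ ≤ dp + |δ| := by linarith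
  have hlogup : Real.log (dp + t*δ) ≤ |Real.log (dp + |δ|)| :=
    le_trans (Real.log_le_log hb' hup) (le_abs_self _)
  have hlogdown : -|Real.log (dp/2)| ≤ Real.log (dp + t*δ) :=
    le_trans (neg_abs_le _) (Real.log_le_log (by linarith) hb2)
  set C := |Real.log (dp/2)| + |Real.log (dp + |δ|)| with hC
  have habs : |Real.log (dp + t*δ)| ≤ C := by
    rw [abs_le]
    constructor
    · have : (0:ℝ) ≤ |Real.log (dp + |δ|)| := abs_nonneg _
      rw [hC]; linarith
    · have : (0:ℝ) ≤ |Real.log (dp/2)| := abs_nonneg _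
      rw [hC]; linarith
  have e1 : t*δ*Real.log (dp + t*δ) ≤ t*(|δ| * C) := by
    calc t*δ*Real.log (dp + t*δ) ≤ |t*δ*Real.log (dp + t*δ)| := le_abs_self _
    _ = t*(|δ| * |Real.log (dp + t*δ)|) := by rw [abs_mul, abs_mul, abs_of_pos ht]; ring
    _ ≤ t*(|δ| * C) := by
        exact mul_le_mul_of_nonneg_left
          (mul_le_mul_of_nonneg_left habs (abs_nonneg _)) ht.le
  have e2 : -(t*δ*Real.log fi) ≤ t*(|δ| * |Real.log fi|) := by
    calc -(t*δ*Real.log fi) ≤ |t*δ*Real.log fi| := neg_le_abs _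
    _ = t*(|δ| * |Real.log fi|) := by rw [abs_mul, abs_mul, abs_of_pos ht]; ring
  have hrest : 0 ≤ t * (|δ| * (|Real.log (abs δ)| + 1)) := by positivity
  nlinarith [e1, e2, h7, hrest]

lemma caseIII {δ fi t : ℝ} (hδ : 0 < δ) (ht : 0 < t) (ht1 : t ≤ 1) :
    (t*δ) * Real.log (t*δ) - t*δ - t*δ*Real.log fi
      ≤ t*(δ*(|Real.log δ| + |Real.log fi| + 1)) + t*δ*Real.log t := by
  rw [Real.log_mul (ne_of_gt ht) (ne_of_gt hδ)]
  have htδ : 0 < t*δ := mul_pos ht hδ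
  have e1 : t*δ*Real.log δ ≤ t*δ*|Real.log δ| :=
    mul_le_mul_of_nonneg_left (le_abs_self _) htδ.le
  have e2 : -(t*δ*Real.log fi) ≤ t*δ*|Real.log fi| := by
    calc -(t*δ*Real.log fi) ≤ |t*δ*Real.log fi| := neg_le_abs _
    _ = t*δ*|Real.log fi| := by rw [abs_mul, abs_of_pos htδ]
  nlinarith [e1, e2]

end CaseLemmas

section MinPos

variable (A : ι → Fin n → ℝ) (b : ι → ℝ)

lemma min_pos (f : ι → ℝ) (hf0 : ∀ i, 0 ≤ f i)
    (x : Fin n → ℝ) (hxF : x ∈ FF A b f) (hxstrict : ∀ i, f i ≠ 0 → ddf A b x i ≠ 0)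
    (p : Fin n → ℝ) (hpF : p ∈ FF A b f)
    (hmin : ∀ y ∈ FF A b f, PsiF A b f p ≤ PsiF A b f y) :
    ∀ i, f i ≠ 0 → 0 < ddf A b p i := by
  classical
  intro j hfj
  by_contra hc
  push_neg at hc
  have hdpj : ddf A b p j = 0 := le_antisymm hc (hpF j).1
  set δ : ι → ℝ := fun i => ddf A b x i - ddf A b p i with hδ
  have hδj : 0 < δ j := by
    have hx0 : 0 < ddf A b x j := lt_of_le_of_ne (hxF j).1 (Ne.symm (hxstrict j hfj))
    simp only [hδ, hdpj]
    simpa using hx0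
  set M : ι → ℝ := fun i => |δ i| * (|Real.log (ddf A b p i / 2)|
    + |Real.log (ddf A b p i + |δ i|)| + |Real.log (f i)| + |Real.log (abs (δ i))| + 1) with hM
  have hM0 : ∀ i, 0 ≤ M i := fun i => by rw [hM]; positivity
  -- eventual statements
  have E1 : ∀ i, ∀ᶠ t in 𝓝[>] (0:ℝ),
      (0 < ddf A b p i → ddf A b p i / 2 ≤ ddf A b p i + t * δ i) := by
    intro i
    by_cases hdpi : 0 < ddf A b p i
    · have hcont : Continuous fun t : ℝ => ddf A b p i + t * δ i := by
        exact continuous_const.add (continuous_id.mul continuous_const)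
      have htend : Tendsto (fun t : ℝ => ddf A b p i + t * δ i) (𝓝[>] 0)
          (𝓝 (ddf A b p i)) := by
        have h2 := (hcont.tendsto 0).mono_left (nhdsWithin_le_nhds (s := Set.Ioi (0:ℝ)))
        simpa using h2
      filter_upwards [htend.eventually
        (eventually_ge_nhds (by linarith : ddf A b p i / 2 < ddf A b p i))] with t ht
      exact fun _ => ht
    · filter_upwards with t
      exact fun h => absurd h hdpi
  have E1' : ∀ᶠ t in 𝓝[>] (0:ℝ), ∀ i,
      (0 < ddf A b p i → ddf A b p i / 2 ≤ ddf A b p i + t * δ i) :=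
    Filter.eventually_all.mpr E1
  have E2 : ∀ᶠ t in 𝓝[>] (0:ℝ), 0 < t := eventually_mem_nhdsWithin
  have E3 : ∀ᶠ t in 𝓝[>] (0:ℝ), t ≤ 1 :=
    (tendsto_id.mono_left nhdsWithin_le_nhds).eventually (eventually_le_nhds zero_lt_one)
  have E4 : ∀ᶠ t in 𝓝[>] (0:ℝ), (∑ i, M i) + δ j * Real.log t ≤ -1 := by
    have hlog : Tendsto Real.log (𝓝[>] (0:ℝ)) atBot :=
      Real.tendsto_log_nhdsGT_zero
    have h2 : Tendsto (fun t => δ j * Real.log t) (𝓝[>] (0:ℝ)) atBot :=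
      hlog.const_mul_atBot hδj
    have h3 : Tendsto (fun t => (∑ i, M i) + δ j * Real.log t) (𝓝[>] (0:ℝ)) atBot :=
      tendsto_atBot_add_const_left _ _ h2
    exact h3.eventually_le_atBot (-1)
  obtain ⟨t, hE1, ht0, ht1, hE4⟩ := (E1'.and (E2.and (E3.and E4))).exists
  set y : Fin n → ℝ := fun r => (1-t) * p r + t * x r with hy
  have hyd : ∀ i, ddf A b y i = ddf A b p i + t * δ i := by
    intro i
    rw [hy, ddf_combo]
    simp only [hδ]
    ring
  have hyF : y ∈ FF A b f := by
    intro i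
    rw [hy]
    constructor
    · rw [ddf_combo]
      exact add_nonneg (mul_nonneg (by linarith) (hpF i).1) (mul_nonneg ht0.le (hxF i).1)
    · intro h
      rw [ddf_combo, (hpF i).2 h, (hxF i).2 h]
      ring
  have hbound : ∀ i, (ddf A b y i * Real.log (ddf A b y i) - ddf A b y i
      - ddf A b y i * Real.log (f i))
      - (ddf A b p i * Real.log (ddf A b p i) - ddf A b p i
      - ddf A b p i * Real.log (f i))
      ≤ t * M i + (if i = j then t * δ j * Real.log t else 0) := by
    intro i
    rw [hyd i]
    by_cases hfi : f i = 0
    · have h1 : ddf A b p i = 0 := (hpF i).2 hfi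
      have h2 : ddf A b x i = 0 := (hxF i).2 hfi
      have hδi : δ i = 0 := by simp [hδ, h1, h2]
      have hij : i ≠ j := by rintro rfl; exact hfj hfi
      rw [h1, hδi, if_neg hij]
      simp only [mul_zero, zero_add, zero_mul, sub_zero, zero_sub, neg_zero, add_zero,
        sub_self]
      exact mul_nonneg ht0.le (hM0 i)
    · have hfi' : 0 < f i := lt_of_le_of_ne (hf0 i) (Ne.symm hfi)
      by_cases hdpi : 0 < ddf A b p i
      · have hij : i ≠ j := by rintro rfl; rw [hdpj] at hdpi; exact lt_irrefl _ hdpi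
        have hb2 := hE1 i hdpi
        have h := caseII (fi := f i) hdpi ht0 ht1 hb2
        rw [if_neg hij, add_zero]
        have hEq : (ddf A b p i + t * δ i) * Real.log (ddf A b p i + t * δ i)
            - (ddf A b p i + t * δ i) - (ddf A b p i + t * δ i) * Real.log (f i)
            - (ddf A b p i * Real.log (ddf A b p i) - ddf A b p i
              - ddf A b p i * Real.log (f i))
            = ((ddf A b p i + t * δ i) * Real.log (ddf A b p i + t * δ i)
              - (ddf A b p i + t * δ i)) - (ddf A b p i * Real.log (ddf A b p i)
              - ddf A b p i) - t * δ i * Real.log (f i) := by ring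
        rw [hEq]
        simp only [hM]
        exact h
      · have hdpi0 : ddf A b p i = 0 := le_antisymm (not_lt.mp hdpi) (hpF i).1
        have hδi : 0 < δ i := by
          have hx0 : 0 < ddf A b x i := lt_of_le_of_ne (hxF i).1 (Ne.symm (hxstrict i hfi))
          simp only [hδ, hdpi0]
          simpa using hx0
        have h := caseIII (fi := f i) hδi ht0 ht1
        have habsδ : |δ i| = δ i := abs_of_pos hδi
        have hMi : δ i * (|Real.log (δ i)| + |Real.log (f i)| + 1) ≤ M i := by
          simp only [hM, hdpi0, zero_add, habsδ]
          have hinner : |Real.log (δ i)| + |Real.log (f i)| + 1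
              ≤ |Real.log ((0:ℝ) / 2)| + |Real.log (δ i)| + |Real.log (f i)|
                + |Real.log (δ i)| + 1 := by
            have := abs_nonneg (Real.log ((0:ℝ)/2))
            have := abs_nonneg (Real.log (δ i))
            linarith
          exact mul_le_mul_of_nonneg_left hinner hδi.le
        rw [hdpi0]
        simp only [zero_add, zero_mul, zero_sub, sub_zero, mul_zero, neg_zero, sub_neg_eq_add]
        have hmm := mul_le_mul_of_nonneg_left hMi ht0.le
        by_cases hij : i = j
        · subst hij
          rw [if_pos rfl]
          linarith [h, hmm]
        · rw [if_neg hij]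
          have hlt : t * δ i * Real.log t ≤ 0 := by
            have hlog : Real.log t ≤ 0 := Real.log_nonpos ht0.le ht1
            have h0 : 0 ≤ t * δ i := (mul_pos ht0 hδi).le
            exact mul_nonpos_of_nonneg_of_nonpos h0 hlog
          linarith [h, hmm, hlt]
  have hsum := Finset.sum_le_sum (fun i (_ : i ∈ Finset.univ) => hbound i)
  have hleft : PsiF A b f y - PsiF A b f p
      = ∑ i, ((ddf A b y i * Real.log (ddf A b y i) - ddf A b y i
      - ddf A b y i * Real.log (f i))
      - (ddf A b p i * Real.log (ddf A b p i) - ddf A b p i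
      - ddf A b p i * Real.log (f i))) := by
    rw [Finset.sum_sub_distrib]
    rfl
  have hright : ∑ i, (t * M i + (if i = j then t * δ j * Real.log t else 0))
      = t * (∑ i, M i) + t * δ j * Real.log t := by
    rw [Finset.sum_add_distrib, ← Finset.mul_sum, Finset.sum_ite_eq' Finset.univ j]
    simp
  have hfinal : PsiF A b f y - PsiF A b f p ≤ t * (-1) := by
    have h1 : PsiF A b f y - PsiF A b f p ≤ t * ((∑ i, M i) + δ j * Real.log t) := by
      rw [hleft]
      calc ∑ i, ((ddf A b y i * Real.log (ddf A b y i) - ddf A b y i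
          - ddf A b y i * Real.log (f i))
          - (ddf A b p i * Real.log (ddf A b p i) - ddf A b p i
          - ddf A b p i * Real.log (f i)))
          ≤ ∑ i, (t * M i + (if i = j then t * δ j * Real.log t else 0)) := hsum
      _ = t * (∑ i, M i) + t * δ j * Real.log t := hright
      _ = t * ((∑ i, M i) + δ j * Real.log t) := by ring
    exact le_trans h1 (mul_le_mul_of_nonneg_left hE4 ht0.le)
  have hge := hmin y hyF
  nlinarith [hfinal, hge, ht0]

end MinPos




section FirstOrder

variable (A : ι → Fin n → ℝ) (b : ι → ℝ)

lemma first_order (f : ι → ℝ)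
    (p : Fin n → ℝ) (hpF : p ∈ FF A b f)
    (hpos : ∀ i, f i ≠ 0 → 0 < ddf A b p i)
    (hmin : ∀ y ∈ FF A b f, PsiF A b f p ≤ PsiF A b f y)
    (v : Fin n → ℝ) (hv : ∀ i, f i = 0 → (∑ r, A i r * v r) = 0) :
    ∑ i, (∑ r, A i r * v r) * (Real.log (ddf A b p i) - Real.log (f i)) = 0 := by
  classical
  set c : ι → ℝ := fun i => ∑ r, A i r * v r with hcdef
  set φ : ℝ → ℝ := fun t => ∑ i, ((ddf A b p i + t * c i) * Real.log (ddf A b p i + t * c i)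
    - (ddf A b p i + t * c i) - (ddf A b p i + t * c i) * Real.log (f i)) with hφ
  have hφψ : ∀ t, φ t = PsiF A b f (fun r => p r + t * v r) := by
    intro t
    rw [hφ]
    unfold PsiF
    refine Finset.sum_congr rfl fun i _ => ?_
    rw [ddf_line]
  have hderiv : HasDerivAt φ (∑ i, c i * (Real.log (ddf A b p i) - Real.log (f i))) 0 := by
    rw [hφ]
    apply HasDerivAt.fun_sum
    intro i _
    by_cases hfi : f i = 0
    · have hdp0 : ddf A b p i = 0 := (hpF i).2 hfi
      have hc0 : c i = 0 := hv i hfi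
      have hconst : (fun t : ℝ => (ddf A b p i + t * c i) * Real.log (ddf A b p i + t * c i)
          - (ddf A b p i + t * c i) - (ddf A b p i + t * c i) * Real.log (f i))
          = fun _ => (0:ℝ) := by
        funext t; rw [hdp0, hc0]; simp
      rw [hconst, hc0, zero_mul]
      exact hasDerivAt_const _ _
    · have hdp : 0 < ddf A b p i := hpos i hfi
      have haff : HasDerivAt (fun t : ℝ => ddf A b p i + t * c i) (c i) 0 := by
        simpa using ((hasDerivAt_id (0:ℝ)).mul_const (c i)).const_add (ddf A b p i)
      have hlog0 : HasDerivAt Real.log (ddf A b p i)⁻¹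
          ((fun t : ℝ => ddf A b p i + t * c i) 0) := by
        simpa using Real.hasDerivAt_log (ne_of_gt hdp)
      have hlog : HasDerivAt (fun t : ℝ => Real.log (ddf A b p i + t * c i))
          ((ddf A b p i)⁻¹ * c i) 0 := by
        simpa [Function.comp_def] using hlog0.comp 0 haff
      have hprod := haff.mul hlog
      have hsub := (hprod.sub haff).sub (haff.mul_const (Real.log (f i)))
      convert hsub using 1
      · rfl
      rw [show ddf A b p i + 0 * c i = ddf A b p i by ring]
      field_simp
      ring
  have hloc : IsLocalMin φ 0 := by
    have hEv : ∀ᶠ t in 𝓝 (0:ℝ), ∀ i, f i ≠ 0 → 0 < ddf A b p i + t * c i := by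
      rw [eventually_all]
      intro i
      by_cases hfi : f i = 0
      · filter_upwards with t
        exact fun h => absurd hfi h
      · have hdp : 0 < ddf A b p i := hpos i hfi
        have hcont : Continuous fun t : ℝ => ddf A b p i + t * c i :=
          continuous_const.add (continuous_id.mul continuous_const)
        have htend : Tendsto (fun t : ℝ => ddf A b p i + t * c i) (𝓝 0)
            (𝓝 (ddf A b p i)) := by
          have h2 := hcont.tendsto 0
          simpa using h2
        filter_upwards [htend.eventually (eventually_gt_nhds hdp)] with t ht
        exact fun _ => ht
    filter_upwards [hEv] with t ht
    have hp0 : (fun r => p r + (0:ℝ) * v r) = p := by funext r; ring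
    show φ 0 ≤ φ t
    rw [hφψ t, hφψ 0, hp0]
    apply hmin
    intro i
    rw [ddf_line]
    constructor
    · by_cases hfi : f i = 0
      · rw [(hpF i).2 hfi, hv i hfi]; simp
      · exact (ht i hfi).le
    · intro hfi
      rw [(hpF i).2 hfi, hv i hfi]; simp
  exact hloc.hasDerivAt_eq_zero hderiv

end FirstOrder

section SurjFull

variable {A : ι → Fin n → ℝ} {b : ι → ℝ} {Q : Set (Fin n → ℝ)}

lemma ddf_nonneg' (hQ : Q = {x | ∀ i, b i ≤ ∑ r, A i r * x r}) {p : Fin n → ℝ}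
    (hp : p ∈ Q) (i : ι) : 0 ≤ ddf A b p i := by
  rw [hQ] at hp; exact sub_nonneg.2 (hp i)

lemma phi_surj (hQ : Q = {x | ∀ i, b i ≤ ∑ r, A i r * x r})
    (hrank : Function.Injective
      (fun x : Fin n → ℝ => (fun i => ∑ r, A i r * x r : ι → ℝ)))
    (f : EuclideanSpace ℝ ι)
    (hf0 : ∀ i, 0 ≤ f i) (x : Fin n → ℝ) (hxQ : x ∈ Q)
    (hx : ∀ i, (f i = 0 ↔ ∑ r, A i r * x r = b i)) :
    ∃ p ∈ Q, ∃ a : ι → ℝ, PerpA A a ∧ ∀ i, Real.exp (a i) * ddf A b p i = f i := by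
  classical
  have hxiff : ∀ i, (f i = 0 ↔ ddf A b x i = 0) := by
    intro i
    rw [hx i, ddf, sub_eq_zero]
  have hxF : x ∈ FF A b f := fun i => ⟨ddf_nonneg' hQ hxQ i, fun h => (hxiff i).1 h⟩
  have hxstrict : ∀ i, f i ≠ 0 → ddf A b x i ≠ 0 := fun i hfi h => hfi ((hxiff i).2 h)
  obtain ⟨p, hpF, hmin⟩ := exists_min A b (fun i => f i) hf0 hrank x hxF
  have hpos := min_pos A b (fun i => f i) hf0 x hxF hxstrict p hpF hmin
  have hpQ : p ∈ Q := by
    rw [hQ]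
    intro i
    have h1 := (hpF i).1
    rw [ddf] at h1
    linarith
  have hfo := first_order A b (fun i => f i) p hpF hpos hmin
  set w : ι → ℝ := fun i => if f i = 0 then 0 else Real.log (f i) - Real.log (ddf A b p i)
    with hw
  set u : EuclideanSpace ℝ (Fin n) := WithLp.toLp 2 (fun r => ∑ i, w i * A i r) with hu
  set Ssub : Submodule ℝ (EuclideanSpace ℝ (Fin n)) := Submodule.span ℝ
    (Set.range (fun i : {i : ι // f i = 0} => (WithLp.toLp 2 (A i.1) : EuclideanSpace ℝ (Fin n)))) with hS
  have husp : u ∈ Ssub := by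
    rw [← Submodule.orthogonal_orthogonal Ssub, Submodule.mem_orthogonal]
    intro y hy
    have hyv : ∀ i, f i = 0 → (∑ r, A i r * y r) = 0 := by
      intro i hfi
      have hAmem : (WithLp.toLp 2 (A i) : EuclideanSpace ℝ (Fin n)) ∈ Ssub := by
        rw [hS]
        exact Submodule.subset_span ⟨⟨i, hfi⟩, rfl⟩
      have h2 := (Submodule.mem_orthogonal _ y).mp hy _ hAmem
      rw [PiLp.inner_apply] at h2
      rw [← h2]
      exact Finset.sum_congr rfl fun r _ => by simp [RCLike.inner_apply, mul_comm]
    have h1 := hfo y hyv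
    rw [PiLp.inner_apply]
    have h2 : ∀ r ∈ Finset.univ, (inner ℝ (y r) (u r) : ℝ) = y r * u r := fun r _ => by
      simp [RCLike.inner_apply, mul_comm]
    rw [Finset.sum_congr rfl h2]
    have h3 : ∑ r, y r * u r = ∑ i, w i * (∑ r, A i r * y r) := by
      rw [hu]
      simp only [PiLp.toLp_apply]
      have e1 : ∀ r ∈ Finset.univ, y r * (∑ i, w i * A i r)
          = ∑ i, y r * (w i * A i r) := fun r _ => Finset.mul_sum _ _ _
      rw [Finset.sum_congr rfl e1, Finset.sum_comm]
      refine Finset.sum_congr rfl fun i _ => ?_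
      rw [Finset.mul_sum]
      refine Finset.sum_congr rfl fun r _ => by ring
    rw [h3]
    have h4 : ∀ i, w i * (∑ r, A i r * y r)
        = -((∑ r, A i r * y r) * (Real.log (ddf A b p i) - Real.log (f i))) := by
      intro i
      by_cases hfi : f i = 0
      · rw [hyv i hfi]
        simp
      · simp only [hw, if_neg hfi]
        ring
    rw [Finset.sum_congr rfl fun i _ => h4 i, Finset.sum_neg_distrib, h1, neg_zero]
  rw [hS] at husp
  obtain ⟨cc, hcc⟩ := (Submodule.mem_span_range_iff_exists_fun ℝ).mp husp
  set z : ι → ℝ := fun i => if h : f i = 0 then -cc ⟨i, h⟩ else 0 with hz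
  refine ⟨p, hpQ, fun i => w i + z i, ?_, ?_⟩
  · intro r
    show ∑ i, (w i + z i) * A i r = 0
    have h1 : ∑ i, (w i + z i) * A i r = (∑ i, w i * A i r) + ∑ i, z i * A i r := by
      rw [← Finset.sum_add_distrib]
      exact Finset.sum_congr rfl fun i _ => by ring
    rw [h1]
    have h3 : (∑ i : {i : ι // f i = 0}, cc i * A i.1 r) = u r := by
      have h5 := congrArg (fun z : EuclideanSpace ℝ (Fin n) => z r) hcc
      simp only [WithLp.ofLp_sum, WithLp.ofLp_smul, Finset.sum_apply, Pi.smul_apply,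
        PiLp.toLp_apply, smul_eq_mul] at h5
      rw [← h5]
    have e1 : ∑ i : {i : ι // f i = 0}, cc i * A i.1 r
        = ∑ i : {i : ι // f i = 0}, -(z i.1 * A i.1 r) := by
      refine Finset.sum_congr rfl fun i _ => ?_
      simp only [hz]
      rw [dif_pos i.2]
      ring
    have e2 : ∑ i ∈ Finset.univ.filter (fun i => f i = 0), z i * A i r
        = ∑ i : {i : ι // f i = 0}, z i.1 * A i.1 r :=
      Finset.sum_subtype (p := fun i => f i = 0) _ (fun i => by simp) _
    have e3 : ∑ i ∈ Finset.univ.filter (fun i => f i = 0), z i * A i r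
        = ∑ i, z i * A i r := by
      refine Finset.sum_filter_of_ne fun i _ hne => ?_
      by_contra hfi
      exact hne (by simp [hz, dif_neg hfi])
    have h2 : ∑ i, z i * A i r = - u r := by
      rw [← e3, e2]
      have e4 : ∑ i : {i : ι // f i = 0}, z i.1 * A i.1 r
          = -∑ i : {i : ι // f i = 0}, cc i * A i.1 r := by
        rw [← Finset.sum_neg_distrib]
        refine Finset.sum_congr rfl fun i _ => ?_
        simp only [hz]
        rw [dif_pos i.2]
        ring
      rw [e4, h3]
    rw [h2, hu]
    simp only [PiLp.toLp_apply]
    ring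
  · intro i
    show Real.exp (w i + z i) * ddf A b p i = f i
    by_cases hfi : f i = 0
    · have h0 : ddf A b p i = 0 := (hpF i).2 hfi
      rw [h0, hfi, mul_zero]
    · have hdp : 0 < ddf A b p i := hpos i hfi
      have hfipos : 0 < f i := lt_of_le_of_ne (hf0 i) (Ne.symm hfi)
      have hai : w i + z i = Real.log (f i) - Real.log (ddf A b p i) := by
        simp [hw, hz, hfi]
      rw [hai, Real.exp_sub, Real.exp_log hfipos, Real.exp_log hdp]
      field_simp

end SurjFull




section Core

variable {A : ι → Fin n → ℝ} {b : ι → ℝ}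

set_option maxHeartbeats 1000000 in
lemma seq_core
    (hrank : Function.Injective
      (fun x : Fin n → ℝ => (fun i => ∑ r, A i r * x r : ι → ℝ)))
    (p : Fin n → ℝ) (a : ι → ℝ) (pk : ℕ → Fin n → ℝ) (ak : ℕ → ι → ℝ)
    (hdp : ∀ i, 0 ≤ ddf A b p i) (hdpk : ∀ k i, 0 ≤ ddf A b (pk k) i)
    (ha : PerpA A a) (hak : ∀ k, PerpA A (ak k))
    (hind : LinearIndependent ℝ (fun i : {i : ι // ∑ r, A i r * p r = b i} => A i.1))
    (hconv : ∀ i, Tendsto (fun k => Real.exp (ak k i) * ddf A b (pk k) i) atTop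
      (𝓝 (Real.exp (a i) * ddf A b p i))) :
    Tendsto pk atTop (𝓝 p) ∧ ∀ i, Tendsto (fun k => ak k i) atTop (𝓝 (a i)) := by
  classical
  -- eventual positivity off the zero set
  have hFpos : ∀ i, ddf A b p i ≠ 0 → 0 < Real.exp (a i) * ddf A b p i := by
    intro i h
    exact mul_pos (Real.exp_pos _) (lt_of_le_of_ne (hdp i) (Ne.symm h))
  have hev1 : ∀ᶠ k in atTop, ∀ i, ddf A b p i ≠ 0 → 0 < ddf A b (pk k) i := by
    rw [eventually_all]
    intro i
    by_cases hDi : ddf A b p i = 0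
    · filter_upwards with k
      exact fun h => absurd hDi h
    · filter_upwards [(hconv i).eventually (eventually_gt_nhds (hFpos i hDi))] with k hk
      intro _
      by_contra hneg
      push_neg at hneg
      have : ddf A b (pk k) i = 0 := le_antisymm hneg (hdpk k i)
      rw [this, mul_zero] at hk
      exact lt_irrefl _ hk
  -- the three families of terms
  set gT : ℕ → ι → ℝ := fun k i => if ddf A b p i = 0
    then (a i - ak k i) * ddf A b (pk k) i
    else (Real.log (ddf A b (pk k) i) - Real.log (ddf A b p i))
      * (ddf A b (pk k) i - ddf A b p i) with hgT
  set eT : ℕ → ι → ℝ := fun k i => if ddf A b p i = 0 then 0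
    else (Real.log (Real.exp (ak k i) * ddf A b (pk k) i)
      - Real.log (Real.exp (a i) * ddf A b p i))
      * (ddf A b (pk k) i - ddf A b p i) with heT
  set dT : ℕ → ι → ℝ := fun k i => if ddf A b p i = 0
    then Real.exp (ak k i) * ddf A b (pk k) i * Real.exp (-(a i) - 1) else 0 with hdT
  have hdT0 : ∀ k i, 0 ≤ dT k i := by
    intro k i
    simp only [hdT]
    by_cases hDi : ddf A b p i = 0
    · rw [if_pos hDi]
      have := hdpk k i
      positivity
    · rw [if_neg hDi]

  -- the orthogonality identity
  have hID : ∀ᶠ k in atTop, ∑ i, gT k i = ∑ i, eT k i := by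
    filter_upwards [hev1] with k hk
    have horth := perpA_ddf_key (b := b) (hak k) ha (pk k) p
    have hper : ∀ i, gT k i = eT k i
        - (ak k i - a i) * (ddf A b (pk k) i - ddf A b p i) := by
      intro i
      by_cases hDi : ddf A b p i = 0
      · simp only [hgT, heT, if_pos hDi, hDi]
        ring
      · have hDk : 0 < ddf A b (pk k) i := hk i hDi
        have hDp : 0 < ddf A b p i := lt_of_le_of_ne (hdp i) (Ne.symm hDi)
        simp only [hgT, heT, if_neg hDi]
        rw [Real.log_mul (Real.exp_ne_zero _) (ne_of_gt hDk),
          Real.log_mul (Real.exp_ne_zero _) (ne_of_gt hDp), Real.log_exp, Real.log_exp]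
        ring
    rw [Finset.sum_congr rfl fun i _ => hper i, Finset.sum_sub_distrib, horth, sub_zero]
  -- lower bounds for the terms
  have hlb : ∀ᶠ k in atTop, ∀ i, -(dT k i) ≤ gT k i := by
    filter_upwards [hev1] with k hk
    intro i
    by_cases hDi : ddf A b p i = 0
    · simp only [hgT, hdT, if_pos hDi]
      rcases eq_or_lt_of_le (hdpk k i) with h0 | h0
      · rw [← h0]
        simp
      · have hFk : 0 < Real.exp (ak k i) * ddf A b (pk k) i :=
          mul_pos (Real.exp_pos _) h0
        have hak' : ak k i = Real.log (Real.exp (ak k i) * ddf A b (pk k) i)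
            - Real.log (ddf A b (pk k) i) := by
          rw [Real.log_mul (Real.exp_ne_zero _) (ne_of_gt h0), Real.log_exp]
          ring
        have h2 := R2 (ddf A b (pk k) i)
          (Real.log (Real.exp (ak k i) * ddf A b (pk k) i) - a i) (hdpk k i)
        have h3 : Real.exp (Real.log (Real.exp (ak k i) * ddf A b (pk k) i) - a i - 1)
            = Real.exp (ak k i) * ddf A b (pk k) i * Real.exp (-(a i) - 1) := by
          rw [show Real.log (Real.exp (ak k i) * ddf A b (pk k) i) - a i - 1
            = Real.log (Real.exp (ak k i) * ddf A b (pk k) i) + (-(a i) - 1) by ring,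
            Real.exp_add, Real.exp_log hFk]
        rw [h3] at h2
        nlinarith [h2]
    · simp only [hgT, hdT, if_neg hDi]
      have hDk : 0 < ddf A b (pk k) i := hk i hDi
      have hDp : 0 < ddf A b p i := lt_of_le_of_ne (hdp i) (Ne.symm hDi)
      have := R5 hDp hDk
      linarith
  -- notation for constants
  set m : ℕ := Fintype.card ι with hm
  set ε₀ : ℝ := 1 / (4 * (m + 1)) with hε₀
  have hε₀pos : 0 < ε₀ := by rw [hε₀]; positivity
  set CD : ℝ := ∑ i, ddf A b p i with hCD
  have hCD0 : 0 ≤ CD := Finset.sum_nonneg fun i _ => hdp i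
  have hDleCD : ∀ i, ddf A b p i ≤ CD :=
    fun i => Finset.single_le_sum (fun j _ => hdp j) (Finset.mem_univ i)
  set K1 : ℝ := Real.exp 1 * (CD + 1) + 2*ε₀*CD + 2 + Real.exp 1 + 1 with hK1
  have hK1pos : 0 < K1 := by
    rw [hK1]
    have := Real.exp_pos 1
    nlinarith [hε₀pos, hCD0]
  set R0 : ℝ := 2 * m * K1 + 1 with hR0
  -- eventual smallness of the log-ratios
  have hev2 : ∀ᶠ k in atTop, ∀ i, ddf A b p i ≠ 0 →
      |Real.log (Real.exp (ak k i) * ddf A b (pk k) i)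
        - Real.log (Real.exp (a i) * ddf A b p i)| ≤ ε₀ := by
    rw [eventually_all]
    intro i
    by_cases hDi : ddf A b p i = 0
    · filter_upwards with k h
      exact absurd hDi h
    · have hF : Real.exp (a i) * ddf A b p i ≠ 0 := ne_of_gt (hFpos i hDi)
      have hlogt : Tendsto (fun k => Real.log (Real.exp (ak k i) * ddf A b (pk k) i))
          atTop (𝓝 (Real.log (Real.exp (a i) * ddf A b p i))) :=
        (Real.continuousAt_log hF).tendsto.comp (hconv i)
      have hsub : Tendsto (fun k => Real.log (Real.exp (ak k i) * ddf A b (pk k) i)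
          - Real.log (Real.exp (a i) * ddf A b p i)) atTop (𝓝 0) := by
        simpa using hlogt.sub_const (Real.log (Real.exp (a i) * ddf A b p i))
      filter_upwards [Metric.tendsto_nhds.mp hsub ε₀ hε₀pos] with k hk _
      rw [Real.dist_eq, sub_zero] at hk
      exact hk.le
  have hev3 : ∀ᶠ k in atTop, ∀ i, ddf A b p i = 0 →
      Real.exp (ak k i) * ddf A b (pk k) i ≤ Real.exp (a i) := by
    rw [eventually_all]
    intro i
    by_cases hDi : ddf A b p i = 0
    · have h0 : Real.exp (a i) * ddf A b p i = 0 := by rw [hDi, mul_zero]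
      have h1 : Tendsto (fun k => Real.exp (ak k i) * ddf A b (pk k) i) atTop (𝓝 0) :=
        h0 ▸ hconv i
      filter_upwards [h1.eventually (eventually_lt_nhds (Real.exp_pos (a i)))] with k hk _
      exact hk.le
    · filter_upwards with k h
      exact absurd h hDi
  have hdTtend : ∀ i, Tendsto (fun k => dT k i) atTop (𝓝 0) := by
    intro i
    by_cases hDi : ddf A b p i = 0
    · have h0 : Real.exp (a i) * ddf A b p i = 0 := by rw [hDi, mul_zero]
      have h1 : Tendsto (fun k => Real.exp (ak k i) * ddf A b (pk k) i) atTop (𝓝 0) :=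
        h0 ▸ hconv i
      have h2 := h1.mul_const (Real.exp (-(a i) - 1))
      rw [zero_mul] at h2
      have h3 : (fun k => dT k i)
          = fun k => Real.exp (ak k i) * ddf A b (pk k) i * Real.exp (-(a i) - 1) := by
        funext k
        simp [hdT, if_pos hDi]
      rw [h3]
      exact h2
    · have h3 : (fun k => dT k i) = fun _ => (0:ℝ) := by
        funext k
        simp [hdT, if_neg hDi]
      rw [h3]
      exact tendsto_const_nhds
  have hdTsum : Tendsto (fun k => ∑ i, dT k i) atTop (𝓝 0) := by
    have := tendsto_finset_sum Finset.univ (fun i (_ : i ∈ Finset.univ) => hdTtend i)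
    simpa using this
  have hev4 : ∀ᶠ k in atTop, ∑ i, dT k i ≤ 1 :=
    hdTsum.eventually (eventually_le_nhds zero_lt_one)
  -- the eventual uniform bound
  have hbnd : ∀ᶠ k in atTop, ∀ j, ddf A b (pk k) j ≤ R0 := by
    filter_upwards [hev1, hev2, hev3, hev4, hID, hlb] with k hk1 hk2 hk3 hk4 hkID hklb
    have hSig0 : 0 ≤ ∑ i, ddf A b (pk k) i := Finset.sum_nonneg fun i _ => hdpk k i
    have hEk : ∑ i, eT k i ≤ ε₀ * ((∑ i, ddf A b (pk k) i) + CD) := by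
      have hper : ∀ i ∈ Finset.univ, eT k i
          ≤ ε₀ * (ddf A b (pk k) i + ddf A b p i) := by
        intro i _
        by_cases hDi : ddf A b p i = 0
        · simp only [heT, if_pos hDi]
          have := hdpk k i
          have := hdp i
          positivity
        · simp only [heT, if_neg hDi]
          have hL := hk2 i hDi
          have habs : |ddf A b (pk k) i - ddf A b p i|
              ≤ ddf A b (pk k) i + ddf A b p i := by
            rw [abs_le]
            constructor
            · linarith [hdpk k i, hdp i]
            · linarith [hdpk k i, hdp i]
          calc (Real.log (Real.exp (ak k i) * ddf A b (pk k) i)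
              - Real.log (Real.exp (a i) * ddf A b p i))
              * (ddf A b (pk k) i - ddf A b p i)
              ≤ |(Real.log (Real.exp (ak k i) * ddf A b (pk k) i)
              - Real.log (Real.exp (a i) * ddf A b p i))
              * (ddf A b (pk k) i - ddf A b p i)| := le_abs_self _
            _ = |Real.log (Real.exp (ak k i) * ddf A b (pk k) i)
              - Real.log (Real.exp (a i) * ddf A b p i)|
              * |ddf A b (pk k) i - ddf A b p i| := abs_mul _ _
            _ ≤ ε₀ * (ddf A b (pk k) i + ddf A b p i) :=
              mul_le_mul hL habs (abs_nonneg _) hε₀pos.le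
      calc ∑ i, eT k i ≤ ∑ i, ε₀ * (ddf A b (pk k) i + ddf A b p i) :=
          Finset.sum_le_sum hper
        _ = ε₀ * ((∑ i, ddf A b (pk k) i) + CD) := by
          rw [← Finset.mul_sum, Finset.sum_add_distrib, hCD]
    have hterm : ∀ j, gT k j ≤ ε₀ * ((∑ i, ddf A b (pk k) i) + CD) + 1 := by
      intro j
      have hsplit := Finset.add_sum_erase Finset.univ (gT k) (Finset.mem_univ j)
      have herase : ∑ i ∈ Finset.univ.erase j, -(dT k i)
          ≤ ∑ i ∈ Finset.univ.erase j, gT k i :=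
        Finset.sum_le_sum fun i _ => hklb i
      have hdsum : ∑ i ∈ Finset.univ.erase j, dT k i ≤ ∑ i, dT k i :=
        Finset.sum_le_sum_of_subset_of_nonneg (Finset.erase_subset _ _)
          fun i _ _ => hdT0 k i
      have hneg : ∑ i ∈ Finset.univ.erase j, -(dT k i)
          = -(∑ i ∈ Finset.univ.erase j, dT k i) := Finset.sum_neg_distrib _
      linarith [hkID, hEk, hk4]
    have hjb : ∀ j, ddf A b (pk k) j ≤ K1 + 2*ε₀*(∑ i, ddf A b (pk k) i) := by
      intro j
      have hterm' := hterm j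
      have hE : (0:ℝ) < Real.exp 1 := Real.exp_pos 1
      have hECD : (0:ℝ) ≤ Real.exp 1 * CD := mul_nonneg hE.le hCD0
      have h2CD : (0:ℝ) ≤ ε₀ * CD := mul_nonneg hε₀pos.le hCD0
      have h2S : (0:ℝ) ≤ ε₀ * (∑ i, ddf A b (pk k) i) := mul_nonneg hε₀pos.le hSig0
      by_cases hDj : ddf A b p j = 0
      · by_cases hbig : ddf A b (pk k) j ≤ Real.exp 1
        · rw [hK1]
          linarith [hbig, hECD, h2CD, h2S, hE]
        · push_neg at hbig
          have hDk : 0 < ddf A b (pk k) j := lt_trans (Real.exp_pos 1) hbig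
          have hFk : 0 < Real.exp (ak k j) * ddf A b (pk k) j :=
            mul_pos (Real.exp_pos _) hDk
          have hc : Real.log (Real.exp (ak k j) * ddf A b (pk k) j) - a j ≤ 0 := by
            have h5 := hk3 j hDj
            have hlog := Real.log_le_log hFk h5
            rw [Real.log_exp] at hlog
            linarith
          have hgj : gT k j = ddf A b (pk k) j * (Real.log (ddf A b (pk k) j)
              - (Real.log (Real.exp (ak k j) * ddf A b (pk k) j) - a j)) := by
            simp only [hgT, if_pos hDj]
            rw [Real.log_mul (Real.exp_ne_zero _) (ne_of_gt hDk), Real.log_exp]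
            ring
          have hexp : Real.exp ((Real.log (Real.exp (ak k j) * ddf A b (pk k) j) - a j) + 1)
              ≤ ddf A b (pk k) j := by
            have := Real.exp_le_exp.mpr (by linarith :
              (Real.log (Real.exp (ak k j) * ddf A b (pk k) j) - a j) + 1 ≤ 1)
            exact le_trans this hbig.le
          have h3 := R3 (Real.log (Real.exp (ak k j) * ddf A b (pk k) j) - a j)
            (ddf A b (pk k) j) hexp
          rw [← hgj] at h3
          rw [hK1]
          linarith [h3, hterm', h2CD, h2S, hECD, hE]
      · have hDp : 0 < ddf A b p j := lt_of_le_of_ne (hdp j) (Ne.symm hDj)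
        by_cases hbig : ddf A b (pk k) j ≤ Real.exp 1 * (ddf A b p j + 1)
        · have h1 : Real.exp 1 * (ddf A b p j + 1) ≤ Real.exp 1 * (CD + 1) :=
            mul_le_mul_of_nonneg_left (by linarith [hDleCD j]) hE.le
          rw [hK1]
          linarith [hbig, h1, h2CD, h2S]
        · push_neg at hbig
          have h2 : Real.exp 1 * ddf A b p j ≤ ddf A b (pk k) j := by
            have hexpand : Real.exp 1 * (ddf A b p j + 1)
                = Real.exp 1 * ddf A b p j + Real.exp 1 := by ring
            linarith [hbig, hE, hexpand]
          have h4 := R4 hDp h2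
          have hgj : gT k j = (Real.log (ddf A b (pk k) j) - Real.log (ddf A b p j))
              * (ddf A b (pk k) j - ddf A b p j) := by
            simp only [hgT, if_neg hDj]
          rw [← hgj] at h4
          rw [hK1]
          linarith [h4, hterm', h2CD, h2S, hECD, hE]
    have hSigb : (∑ i, ddf A b (pk k) i) ≤ 2 * m * K1 := by
      have hsum := Finset.sum_le_sum (fun j (_ : j ∈ Finset.univ) => hjb j)
      rw [Finset.sum_const, Finset.card_univ, nsmul_eq_mul] at hsum
      have hm0 : (0:ℝ) ≤ (m:ℝ) := Nat.cast_nonneg m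
      have hm2 : (m:ℝ) * (2*ε₀) ≤ 1/2 := by
        rw [hε₀]
        have h1 : (0:ℝ) < 4*((m:ℝ)+1) := by positivity
        have h2 : (m:ℝ) * (2 * (1 / (4 * ((m:ℝ) + 1)))) = (2*(m:ℝ)) / (4*((m:ℝ)+1)) := by
          field_simp
        rw [h2, div_le_div_iff₀ h1 (by norm_num : (0:ℝ) < 2)]
        nlinarith [hm0]
      have hmul := mul_le_mul_of_nonneg_right hm2 hSig0
      linarith [hsum, hmul, hK1pos, hm0]
    intro j
    have hle : ddf A b (pk k) j ≤ ∑ i, ddf A b (pk k) i :=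
      Finset.single_le_sum (fun i _ => hdpk k i) (Finset.mem_univ j)
    rw [hR0]
    linarith
  -- the error sum tends to zero
  have hEktend : Tendsto (fun k => ∑ i, eT k i) atTop (𝓝 0) := by
    have hterm : ∀ i, Tendsto (fun k => eT k i) atTop (𝓝 0) := by
      intro i
      by_cases hDi : ddf A b p i = 0
      · have h1 : (fun k => eT k i) = fun _ => (0:ℝ) := by
          funext k; simp [heT, if_pos hDi]
        rw [h1]; exact tendsto_const_nhds
      · have hF : Real.exp (a i) * ddf A b p i ≠ 0 := ne_of_gt (hFpos i hDi)
        have hLtend : Tendsto (fun k => Real.log (Real.exp (ak k i) * ddf A b (pk k) i)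
            - Real.log (Real.exp (a i) * ddf A b p i)) atTop (𝓝 0) := by
          have h1 := (Real.continuousAt_log hF).tendsto.comp (hconv i)
          simpa using h1.sub_const (Real.log (Real.exp (a i) * ddf A b p i))
        have hg : Tendsto (fun k => (R0 + ddf A b p i)
            * |Real.log (Real.exp (ak k i) * ddf A b (pk k) i)
            - Real.log (Real.exp (a i) * ddf A b p i)|) atTop (𝓝 0) := by
          simpa using hLtend.abs.const_mul (R0 + ddf A b p i)
        refine squeeze_zero_norm' ?_ hg
        filter_upwards [hbnd] with k hk
        simp only [heT, if_neg hDi, Real.norm_eq_abs, abs_mul]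
        rw [mul_comm]
        apply mul_le_mul_of_nonneg_right _ (abs_nonneg _)
        rw [abs_le]
        constructor
        · linarith [hdpk k i, hdp i, hk i]
        · linarith [hdpk k i, hdp i, hk i]
    simpa using tendsto_finset_sum Finset.univ (fun i (_ : i ∈ Finset.univ) => hterm i)
  -- each gT term tends to zero
  have hgTub : ∀ j, ∀ᶠ k in atTop, gT k j ≤ (∑ i, eT k i) + ∑ i, dT k i := by
    intro j
    filter_upwards [hID, hlb] with k hkID hklb
    have hsplit := Finset.add_sum_erase Finset.univ (gT k) (Finset.mem_univ j)
    have herase : ∑ i ∈ Finset.univ.erase j, -(dT k i)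
        ≤ ∑ i ∈ Finset.univ.erase j, gT k i :=
      Finset.sum_le_sum fun i _ => hklb i
    have hneg : ∑ i ∈ Finset.univ.erase j, -(dT k i)
        = -(∑ i ∈ Finset.univ.erase j, dT k i) := Finset.sum_neg_distrib _
    have hdsum : ∑ i ∈ Finset.univ.erase j, dT k i ≤ ∑ i, dT k i :=
      Finset.sum_le_sum_of_subset_of_nonneg (Finset.erase_subset _ _)
        fun i _ _ => hdT0 k i
    linarith [hkID]
  have hgTtend : ∀ j, Tendsto (fun k => gT k j) atTop (𝓝 0) := by
    intro j
    have hub : Tendsto (fun k => (∑ i, eT k i) + ∑ i, dT k i) atTop (𝓝 0) := by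
      simpa using hEktend.add hdTsum
    have hlbj : Tendsto (fun k => -(dT k j)) atTop (𝓝 0) := by
      simpa using (hdTtend j).neg
    refine tendsto_of_tendsto_of_tendsto_of_le_of_le' hlbj hub ?_ (hgTub j)
    filter_upwards [hlb] with k hk using hk j
  -- coordinatewise convergence of the distances
  have hDtend : ∀ i, Tendsto (fun k => ddf A b (pk k) i) atTop (𝓝 (ddf A b p i)) := by
    intro i
    by_cases hDi : ddf A b p i = 0
    · rw [hDi]
      rw [tendsto_order]
      constructor
      · intro c hc
        filter_upwards with k
        exact lt_of_lt_of_le hc (hdpk k i)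
      · intro c hc
        have hc'0 : 0 < min c 1 := lt_min hc zero_lt_one
        have hη : (0:ℝ) < Real.exp (a i + Real.log (min c 1) - 1) := Real.exp_pos _
        have h0 : Real.exp (a i) * ddf A b p i = 0 := by rw [hDi, mul_zero]
        have hFk0 : Tendsto (fun k => Real.exp (ak k i) * ddf A b (pk k) i) atTop
            (𝓝 0) := h0 ▸ hconv i
        filter_upwards [hFk0.eventually (eventually_lt_nhds hη),
          (hgTtend i).eventually (eventually_lt_nhds hc'0)] with k hk1 hk2
        by_contra hge
        push_neg at hge
        have hDk : 0 < ddf A b (pk k) i := lt_of_lt_of_le hc hge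
        have hc'le : min c 1 ≤ ddf A b (pk k) i := le_trans (min_le_left c 1) hge
        have hFk : 0 < Real.exp (ak k i) * ddf A b (pk k) i :=
          mul_pos (Real.exp_pos _) hDk
        have hlogFk : Real.log (Real.exp (ak k i) * ddf A b (pk k) i)
            < a i + Real.log (min c 1) - 1 := by
          have := Real.log_lt_log hFk hk1
          rwa [Real.log_exp] at this
        have hlogDk : Real.log (min c 1) ≤ Real.log (ddf A b (pk k) i) :=
          Real.log_le_log hc'0 hc'le
        have hgj : gT k i = ddf A b (pk k) i * (Real.log (ddf A b (pk k) i)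
            - (Real.log (Real.exp (ak k i) * ddf A b (pk k) i) - a i)) := by
          simp only [hgT, if_pos hDi]
          rw [Real.log_mul (Real.exp_ne_zero _) (ne_of_gt hDk), Real.log_exp]
          ring
        have hX : 1 < Real.log (ddf A b (pk k) i)
            - (Real.log (Real.exp (ak k i) * ddf A b (pk k) i) - a i) := by linarith
        have hlt : ddf A b (pk k) i < gT k i := by
          rw [hgj]
          exact (lt_mul_iff_one_lt_right hDk).mpr hX
        linarith [hk2]
    · have hDp : 0 < ddf A b p i := lt_of_le_of_ne (hdp i) (Ne.symm hDi)
      have hsq : Tendsto (fun k => (ddf A b (pk k) i - ddf A b p i)^2) atTop (𝓝 0) := by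
        refine tendsto_of_tendsto_of_tendsto_of_le_of_le'
          (g := fun _ => (0:ℝ)) (h := fun k => (max R0 (ddf A b p i)) * gT k i)
          tendsto_const_nhds (by simpa using (hgTtend i).const_mul (max R0 (ddf A b p i)))
          (Filter.Eventually.of_forall fun k => sq_nonneg _) ?_
        filter_upwards [hev1, hbnd] with k hk1 hk2
        have hDk : 0 < ddf A b (pk k) i := hk1 i hDi
        have h6 := R6 hDp hDk (le_max_right _ _)
          (le_trans (hk2 i) (le_max_left _ _))
        have hgj : gT k i = (Real.log (ddf A b (pk k) i) - Real.log (ddf A b p i))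
            * (ddf A b (pk k) i - ddf A b p i) := by
          simp only [hgT, if_neg hDi]
        rw [hgj]
        exact h6
      have habs : Tendsto (fun k => |ddf A b (pk k) i - ddf A b p i|) atTop (𝓝 0) := by
        have h7 : (fun k => |ddf A b (pk k) i - ddf A b p i|)
            = fun k => Real.sqrt ((ddf A b (pk k) i - ddf A b p i)^2) := by
          funext k
          rw [Real.sqrt_sq_eq_abs]
        rw [h7]
        have := (Real.continuous_sqrt.tendsto 0).comp hsq
        simpa [Function.comp_def] using this
      have hsub : Tendsto (fun k => ddf A b (pk k) i - ddf A b p i) atTop (𝓝 0) := by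
        refine tendsto_of_tendsto_of_tendsto_of_le_of_le' (by simpa using habs.neg) habs
          (Filter.Eventually.of_forall fun k => neg_abs_le _)
          (Filter.Eventually.of_forall fun k => le_abs_self _)
      have := hsub.add_const (ddf A b p i)
      simpa using this
  -- convergence of pk
  have hAinj : Function.Injective ⇑(Amap A) := fun u v huv => hrank (congrArg WithLp.ofLp huv)
  have hAmapTend : Tendsto (fun k => Amap A (pk k)) atTop (𝓝 (Amap A p)) := by
    rw [tendsto_euclidean_iff]
    intro i
    have h1 : ∀ y, Amap A y i = ddf A b y i + b i := fun y => by
      rw [Amap_apply, ddf]; ring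
    simp only [h1]
    exact (hDtend i).add_const (b i)
  have hpk : Tendsto pk atTop (𝓝 p) := tendsto_of_apply_linear (Amap A) hAinj hAmapTend
  -- convergence of ak off the zero set
  have hoff : ∀ i, ddf A b p i ≠ 0 →
      Tendsto (fun k => ak k i) atTop (𝓝 (a i)) := by
    intro i hDi
    have hDp : 0 < ddf A b p i := lt_of_le_of_ne (hdp i) (Ne.symm hDi)
    have hF : Real.exp (a i) * ddf A b p i ≠ 0 := ne_of_gt (hFpos i hDi)
    have hlogF := (Real.continuousAt_log hF).tendsto.comp (hconv i)
    have hlogD := (Real.continuousAt_log (ne_of_gt hDp)).tendsto.comp (hDtend i)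
    have hsub := hlogF.sub hlogD
    have hrepr : (fun k => Real.log (Real.exp (ak k i) * ddf A b (pk k) i)
        - Real.log (ddf A b (pk k) i)) =ᶠ[atTop] fun k => ak k i := by
      filter_upwards [hev1] with k hk
      have hDk := hk i hDi
      rw [Real.log_mul (Real.exp_ne_zero _) (ne_of_gt hDk), Real.log_exp]
      ring
    have haeq : Real.log (Real.exp (a i) * ddf A b p i) - Real.log (ddf A b p i)
        = a i := by
      rw [Real.log_mul (Real.exp_ne_zero _) (ne_of_gt hDp), Real.log_exp]
      ring
    rw [← haeq]
    exact hsub.congr' hrepr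
  -- the restriction linear map
  let ρ : PerpSub A →ₗ[ℝ] EuclideanSpace ℝ ι :=
    { toFun := fun u => (WithLp.toLp 2 (fun i => if ddf A b p i = 0 then 0 else u.1 i) :
        EuclideanSpace ℝ ι)
      map_add' := by
        intro u v
        refine (WithLp.ext_iff (p := 2)).mpr (funext fun i => ?_)
        by_cases h : ddf A b p i = 0
        · simp [h]
        · simp [h]
      map_smul' := by
        intro c u
        refine (WithLp.ext_iff (p := 2)).mpr (funext fun i => ?_)
        by_cases h : ddf A b p i = 0
        · simp [h]
        · simp [h] }
  have hρinj : Function.Injective ρ := by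
    rw [← LinearMap.ker_eq_bot (M := PerpSub A)]
    rw [LinearMap.ker_eq_bot']
    intro u hu
    have hvals : ∀ i, ¬ (∑ r, A i r * p r = b i) → u.1 i = 0 := by
      intro i hi
      have hDi : ddf A b p i ≠ 0 := by
        rw [ddf]
        intro h
        exact hi (by linarith [sub_eq_zero.mp h])
      have h2 : (ρ u : EuclideanSpace ℝ ι) i = 0 := by rw [hu]; rfl
      simp only [ρ, LinearMap.coe_mk, AddHom.coe_mk, PiLp.toLp_apply, if_neg hDi] at h2
      exact h2
    have hz := perp_supported_eq_zero (b := b) p hind ((mem_perpSub A).mp u.2) hvals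
    apply Subtype.ext
    refine (WithLp.ext_iff (p := 2)).mpr (funext fun i => ?_)
    exact hz i
  have hmem : ∀ k, (WithLp.toLp 2 (fun i => ak k i - a i) : EuclideanSpace ℝ ι) ∈ PerpSub A :=
    fun k => (mem_perpSub A).mpr (perpA_sub (hak k) ha)
  have hρseq : Tendsto (fun k => ρ ⟨_, hmem k⟩) atTop (𝓝 (ρ 0)) := by
    rw [map_zero, tendsto_euclidean_iff]
    intro i
    by_cases hDi : ddf A b p i = 0
    · have h1 : (fun k => (ρ ⟨_, hmem k⟩ : EuclideanSpace ℝ ι) i) = fun _ => (0:ℝ) := by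
        funext k
        simp [ρ, if_pos hDi]
      rw [h1]
      simpa using (tendsto_const_nhds : Tendsto (fun _ : ℕ => (0:ℝ)) atTop (𝓝 0))
    · have h1 : (fun k => (ρ ⟨_, hmem k⟩ : EuclideanSpace ℝ ι) i)
          = fun k => ak k i - a i := by
        funext k
        simp [ρ, if_neg hDi]
      rw [h1]
      have := (hoff i hDi).sub_const (a i)
      simpa using this
  have hσ : Tendsto (fun k => (⟨_, hmem k⟩ : PerpSub A)) atTop (𝓝 0) :=
    tendsto_of_apply_linear ρ hρinj hρseq
  have hvals : Tendsto (fun k => (WithLp.toLp 2 (fun i => ak k i - a i) : EuclideanSpace ℝ ι)) atTop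
      (𝓝 0) := by
    have hcont := (continuous_subtype_val (p := fun z => z ∈ PerpSub A)).tendsto
      (0 : PerpSub A)
    have := (hcont.comp hσ)
    simpa [Function.comp_def] using this
  refine ⟨hpk, fun i => ?_⟩
  have hcoord := (tendsto_euclidean_iff.mp hvals) i
  have := hcoord.add_const (a i)
  simpa using this

end Core

set_option maxHeartbeats 1000000 in
set_option synthInstance.maxHeartbeats 200000 in
/-- The map `(p, a) ↦ exp(a) * d(p)` (coordinatewise) is a homeomorphism from
`P × V_P^⊥` onto the subspace `W^ℝ(P) ⊂ ℝ^ℱ_{≥0}`, where `P` is embedded in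
`ℝ^ℱ_{≥0}` by the facet-distance map `d(p) = A_P p − b`. -/
theorem polytope_prod_perp_homeo_WR
    (A : ι → (Fin n → ℝ)) (b : ι → ℝ)
    (Q : Set (Fin n → ℝ))
    (hQ : Q = {x | ∀ i, b i ≤ ∑ r, A i r * x r})
    (hne : Q.Nonempty)
    (hrank : Function.Injective
      (fun x : Fin n → ℝ => (fun i => ∑ r, A i r * x r : ι → ℝ)))
    (hsimple : ∀ x ∈ Q,
      LinearIndependent ℝ (fun i : {i : ι // ∑ r, A i r * x r = b i} => A i.1)) :
    ∃ h : (Q × (dirSpace A)ᗮ) ≃ₜ (WR A b Q),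
      ∀ (p : Q) (a : (dirSpace A)ᗮ) (i : ι),
        (h (p, a)).1 i = Real.exp (a.1 i) * ((∑ r, A i r * p.1 r) - b i) := by
  classical
  have hmemWR : ∀ (u : Q × (dirSpace A)ᗮ),
      (WithLp.toLp 2 (fun i => Real.exp (u.2.1 i) * ddf A b u.1.1 i) : EuclideanSpace ℝ ι) ∈ WR A b Q :=
    fun u => phi_mem hQ u.1.2 _
  let Φ : (Q × (dirSpace A)ᗮ) → WR A b Q := fun u =>
    ⟨(WithLp.toLp 2 (fun i => Real.exp (u.2.1 i) * ddf A b u.1.1 i) : EuclideanSpace ℝ ι), hmemWR u⟩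
  have hperp : ∀ (a : (dirSpace A)ᗮ), PerpA A (fun i => a.1 i) := by
    intro a
    exact (mem_perpSub A).mp ((SetLike.ext_iff.mp (dir_orth_eq A) _).mp a.2)
  have hbij : Function.Bijective Φ := by
    constructor
    · rintro ⟨p, a⟩ ⟨q, c⟩ heq
      have heq' : ∀ i, Real.exp (a.1 i) * ddf A b p.1 i
          = Real.exp (c.1 i) * ddf A b q.1 i := by
        intro i
        exact congrArg (fun z : EuclideanSpace ℝ ι => z i) (congrArg Subtype.val heq)
      obtain ⟨h1, h2⟩ := phi_inj hQ hrank hsimple p.2 q.2 (hperp a) (hperp c) heq'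
      refine Prod.ext (Subtype.ext h1) (Subtype.ext ?_)
      refine (WithLp.ext_iff (p := 2)).mpr (funext fun i => ?_)
      exact congrFun h2 i
    · rintro ⟨f, hf⟩
      obtain ⟨hf0, x, hxQ, hx⟩ := hf
      obtain ⟨p, hpQ, aa, haperp, haeq⟩ := phi_surj hQ hrank f hf0 x hxQ hx
      have hamem : (WithLp.toLp 2 aa : EuclideanSpace ℝ ι) ∈ (dirSpace A)ᗮ :=
        (SetLike.ext_iff.mp (dir_orth_eq A) _).mpr ((mem_perpSub A).mpr haperp)
      refine ⟨(⟨p, hpQ⟩, ⟨(WithLp.toLp 2 aa : EuclideanSpace ℝ ι), hamem⟩), ?_⟩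
      apply Subtype.ext
      refine (WithLp.ext_iff (p := 2)).mpr (funext fun i => ?_)
      exact haeq i
  let e : (Q × (dirSpace A)ᗮ) ≃ (WR A b Q) := Equiv.ofBijective Φ hbij
  have hcont : Continuous Φ := by
    apply Continuous.subtype_mk
    have hpi : Continuous fun (u : Q × (dirSpace A)ᗮ) =>
        (fun i => Real.exp (u.2.1 i) * ddf A b u.1.1 i : ι → ℝ) := by
      apply continuous_pi
      intro i
      apply Continuous.mul
      · exact Real.continuous_exp.comp ((continuous_apply i).comp
          ((PiLp.continuous_ofLp 2 (fun _ : ι => ℝ)).comp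
            (continuous_subtype_val.comp continuous_snd)))
      · exact (ddf_cont A b i).comp (continuous_subtype_val.comp continuous_fst)
    exact (PiLp.continuous_toLp 2 (fun _ : ι => ℝ)).comp hpi
  have hcontinv : Continuous e.symm := by
    rw [continuous_iff_seqContinuous]
    intro u x hux
    show Tendsto (fun k => e.symm (u k)) atTop (𝓝 (e.symm x))
    set P := e.symm x with hP
    set Pk := fun k => e.symm (u k) with hPkdef
    have hPx : Φ P = x := e.apply_symm_apply x
    have hPk : ∀ k, Φ (Pk k) = u k := fun k => e.apply_symm_apply (u k)
    have hcoord : ∀ i, Tendsto (fun k => (u k).1 i) atTop (𝓝 (x.1 i)) := by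
      intro i
      have hval : Continuous fun (z : WR A b Q) => (z.1 i) :=
        (continuous_apply i).comp ((PiLp.continuous_ofLp 2 (fun _ : ι => ℝ)).comp
          continuous_subtype_val)
      exact (hval.tendsto x).comp hux
    have hconv : ∀ i, Tendsto (fun k => Real.exp ((Pk k).2.1 i) * ddf A b ((Pk k).1.1) i)
        atTop (𝓝 (Real.exp (P.2.1 i) * ddf A b (P.1.1) i)) := by
      intro i
      have h1 : ∀ k, Real.exp ((Pk k).2.1 i) * ddf A b ((Pk k).1.1) i = (u k).1 i :=
        fun k => congrArg (fun z : EuclideanSpace ℝ ι => z i) (congrArg Subtype.val (hPk k))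
      have h2 : Real.exp (P.2.1 i) * ddf A b (P.1.1) i = x.1 i :=
        congrArg (fun z : EuclideanSpace ℝ ι => z i) (congrArg Subtype.val hPx)
      simp only [h1, h2]
      exact hcoord i
    obtain ⟨hp, ha⟩ := seq_core hrank (P.1.1) (fun i => P.2.1 i)
      (fun k => (Pk k).1.1) (fun k i => (Pk k).2.1 i)
      (ddf_nonneg hQ P.1.2) (fun k i => ddf_nonneg hQ (Pk k).1.2 i)
      (hperp P.2) (fun k => hperp (Pk k).2) (hsimple P.1.1 P.1.2) hconv
    have h1 : Tendsto (fun k => (Pk k).1) atTop (𝓝 P.1) := by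
      rw [tendsto_subtype_rng]
      exact hp
    have h2 : Tendsto (fun k => (Pk k).2) atTop (𝓝 P.2) := by
      rw [tendsto_subtype_rng]
      exact tendsto_euclidean_iff.mpr ha
    have := h1.prodMk_nhds h2
    simpa using this
  refine ⟨{ toEquiv := e, continuous_toFun := hcont, continuous_invFun := hcontinv }, ?_⟩
  intro p a i
  rfl
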